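/- Let F be a field with char(F) ≠ 2 and G a group with an involution * extended F-linearly to the group algebra FG. If FG is normal (i.e., αα* = α*α for all α ∈ FG), then for all g, h ∈ G, either gh = hg or gh = g*h*. -/

import Mathlib

/-- The F-linear extension of a group involution `st` to the group algebra. -/
noncomputable def invMap {F G : Type*} [Field F] [Group G] (st : G → G) :
    MonoidAlgebra F G → MonoidAlgebra F G :=
  fun α => MonoidAlgebra.ofCoeff (Finsupp.mapDomain st α.coeff)

theorem stmt_0 {F G : Type*} [Field F] [Group G] (h2 : (2 : F) ≠ 0)
    (st : G → G) (hanti : ∀ g h : G, st (g * h) = st h * st g)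
    (hinvol : ∀ g : G, st (st g) = g)
    (hnormal : ∀ α : MonoidAlgebra F G, α * invMap st α = invMap st α * α) :
    ∀ g h : G, g * h = h * g ∨ g * h = st g * st h := by
  classical
  have key : ∀ g : G, g * st g = st g * g := by
    intro g
    have h := hnormal (MonoidAlgebra.single g (1 : F))
    simp only [invMap, MonoidAlgebra.coeff_single, Finsupp.mapDomain_single, MonoidAlgebra.ofCoeff_single, MonoidAlgebra.single_mul_single,
      one_mul] at h
    exact MonoidAlgebra.single_left_injective (one_ne_zero (α := F)) h
  intro g h
  have hα := hnormal (MonoidAlgebra.single g (1 : F) + MonoidAlgebra.single (st h) 1)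
  have hm : MonoidAlgebra.ofCoeff (Finsupp.mapDomain st (MonoidAlgebra.single g (1 : F) + MonoidAlgebra.single (st h) 1).coeff)
      = MonoidAlgebra.single (st g) 1 + MonoidAlgebra.single h 1 := by
    rw [MonoidAlgebra.coeff_add, MonoidAlgebra.coeff_single, MonoidAlgebra.coeff_single, Finsupp.mapDomain_add, Finsupp.mapDomain_single, Finsupp.mapDomain_single, hinvol, MonoidAlgebra.ofCoeff_add, MonoidAlgebra.ofCoeff_single, MonoidAlgebra.ofCoeff_single]
  simp only [invMap] at hα
  rw [hm] at hα
  simp only [add_mul, mul_add, MonoidAlgebra.single_mul_single, one_mul] at hα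
  have heval : ((MonoidAlgebra.single (g * st g) (1:F) + MonoidAlgebra.single (st h * st g) 1 +
      (MonoidAlgebra.single (g * h) 1 + MonoidAlgebra.single (st h * h) 1) : MonoidAlgebra F G)).coeff (g * h) =
      ((MonoidAlgebra.single (st g * g) (1:F) + MonoidAlgebra.single (h * g) 1 +
      (MonoidAlgebra.single (st g * st h) 1 + MonoidAlgebra.single (h * st h) 1) : MonoidAlgebra F G)).coeff (g * h) :=
    congrArg (fun f : MonoidAlgebra F G => f.coeff (g * h)) hα
  have key2 : st h * h = h * st h := by
    have := key (st h); rwa [hinvol] at this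
  rw [key g, key2] at heval
  simp only [MonoidAlgebra.coeff_add, MonoidAlgebra.coeff_single, Finsupp.add_apply, Finsupp.single_apply] at heval
  by_cases h3 : h * g = g * h
  · exact Or.inl h3.symm
  by_cases h4 : st g * st h = g * h
  · exact Or.inr h4.symm
  simp only [h3, h4, if_false, add_zero, if_pos rfl, if_true, eq_self_iff_true] at heval
  by_cases h1 : st h * st g = g * h
  · rw [if_pos h1] at heval
    exact absurd (by linear_combination heval) h2
  · rw [if_neg h1] at heval
    exact absurd (by linear_combination heval) (one_ne_zero (α := F))
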